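/- With θ the Coxeter transformation of the Tamari posets as above, for all trees T¹, T² one has θ(T¹ * T²) = -θ(T¹)/θ(T²), where * is the dendriform product and / is left grafting, both extended bilinearly. -/

import Mathlib

/-- Planar binary trees (full binary trees). -/
inductive PBT : Type
  | leaf : PBT
  | node : PBT → PBT → PBT
  deriving DecidableEq

namespace PBT

/-- Degree: number of internal (trivalent) vertices. -/
def deg : PBT → ℕ
  | leaf => 0
  | node l r => deg l + deg r + 1

/-- `graftL S T = S/T`: graft the root of `S` onto the leftmost leaf of `T`. -/
def graftL (S : PBT) : PBT → PBT
  | leaf => S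
  | node l r => node (graftL S l) r

/-- `graftR S T = S\T`: graft the root of `T` onto the rightmost leaf of `S`. -/
def graftR : PBT → PBT → PBT
  | leaf, T => T
  | node l r, T => node l (graftR r T)

/-- The unique tree with one internal vertex. -/
def Y : PBT := node leaf leaf

/-- One right rotation somewhere in the tree: the Tamari covering relation. -/
inductive rot : PBT → PBT → Prop
  | rotate (A B C : PBT) : rot (node (node A B) C) (node A (node B C))
  | left {S S' : PBT} (T : PBT) : rot S S' → rot (node S T) (node S' T)
  | right (S : PBT) {T T' : PBT} : rot T T' → rot (node S T) (node S T')

/-- The Tamari order: reflexive transitive closure of right rotations. -/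
def tamari : PBT → PBT → Prop := Relation.ReflTransGen rot

/-- Left-right reversal. -/
def rev : PBT → PBT
  | leaf => leaf
  | node l r => node (rev r) (rev l)

/-- The left comb of degree `n`. -/
def leftComb : ℕ → PBT
  | 0 => leaf
  | n + 1 => node (leftComb n) leaf

/-- The right comb of degree `n`. -/
def rightComb : ℕ → PBT
  | 0 => leaf
  | n + 1 => node leaf (rightComb n)

end PBT

/-- Trees of degree `n`. -/
abbrev PBTdeg (n : ℕ) := {T : PBT // T.deg = n}

open Classical in
/-- Incidence matrix of the Tamari order in degree `n`. -/
noncomputable def Lmat (n : ℕ) [Fintype (PBTdeg n)] : Matrix (PBTdeg n) (PBTdeg n) ℚ :=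
  Matrix.of fun v w => if PBT.tamari v.1 w.1 then 1 else 0

/-- Coxeter transformation `θ = -L (Lᵗ)⁻¹` of the Tamari poset of degree `n`. -/
noncomputable def thetaMat (n : ℕ) [Fintype (PBTdeg n)] : Matrix (PBTdeg n) (PBTdeg n) ℚ :=
  -(Lmat n * ((Lmat n).transpose)⁻¹)

/-- Basis vector of a tree `T` in the free vector space on trees of degree `n`. -/
def delta (n : ℕ) (T : PBT) : PBTdeg n → ℚ := fun U => if U.1 = T then 1 else 0

open Classical in
/-- Bilinear extension of the dendriform product `S * T = ∑_{S/T ≤ U ≤ S\T} U`. -/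
noncomputable def dprod {n₁ n₂ : ℕ} [Fintype (PBTdeg n₁)] [Fintype (PBTdeg n₂)]
    (f : PBTdeg n₁ → ℚ) (g : PBTdeg n₂ → ℚ) : PBTdeg (n₁ + n₂) → ℚ :=
  fun U => ∑ S₁ : PBTdeg n₁, ∑ S₂ : PBTdeg n₂,
    f S₁ * g S₂ *
      (if PBT.tamari (PBT.graftL S₁.1 S₂.1) U.1 ∧ PBT.tamari U.1 (PBT.graftR S₁.1 S₂.1)
        then 1 else 0)

open Classical in
/-- Bilinear extension of the left grafting `/`. -/
noncomputable def gprodL {n₁ n₂ : ℕ} [Fintype (PBTdeg n₁)] [Fintype (PBTdeg n₂)]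
    (f : PBTdeg n₁ → ℚ) (g : PBTdeg n₂ → ℚ) : PBTdeg (n₁ + n₂) → ℚ :=
  fun U => ∑ S₁ : PBTdeg n₁, ∑ S₂ : PBTdeg n₂,
    f S₁ * g S₂ * (if U.1 = PBT.graftL S₁.1 S₂.1 then 1 else 0)
namespace PBT

lemma deg_graftL (S T : PBT) : deg (graftL S T) = S.deg + T.deg := by
  induction T with
  | leaf => simp [graftL, deg]
  | node l r ih => simp [graftL, deg, ih]; omega

lemma deg_graftR (S T : PBT) : deg (graftR S T) = S.deg + T.deg := by
  induction S with
  | leaf => simp [graftR, deg]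
  | node l r _ ih => simp [graftR, deg, ih]; omega

lemma rot_deg {U V : PBT} (h : rot U V) : U.deg = V.deg := by
  induction h with
  | rotate A B C => simp [deg]; omega
  | left T _ ih => simp [deg, ih]
  | right S _ ih => simp [deg, ih]

lemma tamari_refl (T : PBT) : tamari T T := Relation.ReflTransGen.refl

lemma tamari_trans {A B C : PBT} (h : tamari A B) (h' : tamari B C) : tamari A C :=
  Relation.ReflTransGen.trans h h'

lemma tamari_deg {U V : PBT} (h : tamari U V) : U.deg = V.deg := by
  induction h with
  | refl => rfl
  | tail _ h ih => exact ih.trans (rot_deg h)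

/-- weight, strictly decreasing along rotations. -/
def w : PBT → ℕ
  | leaf => 0
  | node l r => w l + w r + deg l

lemma rot_w {U V : PBT} (h : rot U V) : w V < w U := by
  induction h with
  | rotate A B C => simp [w, deg]; omega
  | left T h ih => have := rot_deg h; simp [w]; omega
  | right S h ih => simp [w]; omega

lemma tamari_w {U V : PBT} (h : tamari U V) : w V ≤ w U := by
  induction h with
  | refl => exact le_rfl
  | tail _ h ih => exact le_trans (rot_w h).le ih

lemma tamari_w_strict {U V : PBT} (h : tamari U V) (hne : U ≠ V) : w V < w U := by
  induction h with
  | refl => exact absurd rfl hne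
  | @tail b c _ h ih =>
    exact lt_of_lt_of_le (rot_w h) (tamari_w (by assumption))

lemma tamari_antisymm {U V : PBT} (h : tamari U V) (h' : tamari V U) : U = V := by
  by_contra hne
  exact absurd (tamari_w_strict h hne) (not_lt.2 (tamari_w h'))

lemma tamari_node_left {l l' : PBT} (r : PBT) (h : tamari l l') :
    tamari (node l r) (node l' r) := by
  induction h with
  | refl => exact tamari_refl _
  | tail _ h ih => exact ih.tail (rot.left r h)

lemma tamari_node_right (l : PBT) {r r' : PBT} (h : tamari r r') :
    tamari (node l r) (node l r') := by
  induction h with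
  | refl => exact tamari_refl _
  | tail _ h ih => exact ih.tail (rot.right l h)

lemma tamari_node {l l' r r' : PBT} (h : tamari l l') (h' : tamari r r') :
    tamari (node l r) (node l' r') :=
  tamari_trans (tamari_node_left r h) (tamari_node_right l' h')

lemma rot_graftL_left {S S' : PBT} (T : PBT) (h : rot S S') :
    rot (graftL S T) (graftL S' T) := by
  induction T with
  | leaf => exact h
  | node l r ih => exact rot.left r ih

lemma tamari_graftL_left {S S' : PBT} (T : PBT) (h : tamari S S') :
    tamari (graftL S T) (graftL S' T) := by
  induction h with
  | refl => exact tamari_refl _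
  | tail _ h ih => exact ih.tail (rot_graftL_left T h)

lemma rot_graftL_right (S : PBT) {T T' : PBT} (h : rot T T') :
    tamari (graftL S T) (graftL S T') := by
  induction h with
  | rotate A B C => exact Relation.ReflTransGen.single (rot.rotate _ _ _)
  | left T h ih => exact tamari_node_left _ ih
  | right Tl h ih => exact tamari_node_right _ (Relation.ReflTransGen.single h)

lemma tamari_graftL_right (S : PBT) {T T' : PBT} (h : tamari T T') :
    tamari (graftL S T) (graftL S T') := by
  induction h with
  | refl => exact tamari_refl _
  | tail _ h ih => exact ih.trans (rot_graftL_right S h)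

lemma tamari_graftL {S S' T T' : PBT} (h : tamari S S') (h' : tamari T T') :
    tamari (graftL S T) (graftL S' T') :=
  tamari_trans (tamari_graftL_left T h) (tamari_graftL_right S' h')

/-- Split a tree at left-spine position of inner degree `k`. -/
def split : PBT → ℕ → PBT × PBT
  | leaf, _ => (leaf, leaf)
  | node l r, k =>
    if k ≤ deg l then ((split l k).1, node (split l k).2 r)
    else (node l (split r (k - deg l - 1)).1, (split r (k - deg l - 1)).2)

lemma split_self (G : PBT) : split G (deg G) = (G, leaf) := by
  induction G with
  | leaf => rfl
  | node l r ihl ihr =>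
    have h : ¬ deg (node l r) ≤ deg l := by simp only [deg]; omega
    have h2 : deg (node l r) - deg l - 1 = deg r := by simp only [deg]; omega
    simp only [split, if_neg h, h2, ihr]

lemma split_zero (H : PBT) : split H 0 = (leaf, H) := by
  induction H with
  | leaf => rfl
  | node l r ihl ihr => simp [split, ihl]

lemma split_graftL (G H : PBT) : split (graftL G H) (deg G) = (G, H) := by
  induction H with
  | leaf => exact split_self G
  | node l r ihl ihr =>
    have h : deg G ≤ deg (graftL G l) := by rw [deg_graftL]; omega
    simp [graftL, split, h, ihl]

lemma split_graftR (G H : PBT) : split (graftR G H) (deg G) = (G, H) := by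
  induction G with
  | leaf => exact split_zero H
  | node a b iha ihb =>
    have h : ¬ deg (node a b) ≤ deg a := by simp only [deg]; omega
    have h2 : deg (node a b) - deg a - 1 = deg b := by simp only [deg]; omega
    simp only [graftR, split, if_neg h, h2, ihb]

lemma split_deg {U : PBT} {k : ℕ} (hk : k ≤ deg U) :
    deg (split U k).1 = k ∧ deg (split U k).2 = deg U - k := by
  induction U generalizing k with
  | leaf => simp [deg] at hk; simp [split, deg, hk]
  | node l r ihl ihr =>
    by_cases h : k ≤ deg l
    · obtain ⟨h1, h2⟩ := ihl h
      simp [split, h, deg, h1, h2]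
      omega
    · have hk' : k - deg l - 1 ≤ deg r := by simp [deg] at hk; omega
      obtain ⟨h1, h2⟩ := ihr hk'
      simp [split, h, deg, h1, h2]
      omega

/-- `node (graftR S T) r ≤ graftR S (node T r)`. -/
lemma claimL (S T r : PBT) : tamari (node (graftR S T) r) (graftR S (node T r)) := by
  induction S with
  | leaf => exact tamari_refl _
  | node a b iha ihb =>
    refine Relation.ReflTransGen.head (rot.rotate _ _ _) ?_
    exact tamari_node_right a ihb

/-- `graftL (node l G) H ≤ node l (graftL G H)`. -/
lemma claimL' (l G H : PBT) : tamari (graftL (node l G) H) (node l (graftL G H)) := by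
  induction H with
  | leaf => exact tamari_refl _
  | node hl hr ihl ihr =>
    refine tamari_trans (tamari_node_left hr ihl) ?_
    exact Relation.ReflTransGen.single (rot.rotate _ _ _)

lemma split_le {U : PBT} {k : ℕ} (hk : k ≤ deg U) :
    tamari (graftL (split U k).1 (split U k).2) U := by
  induction U generalizing k with
  | leaf => simp [deg] at hk; simp [split, hk, graftL]; exact tamari_refl _
  | node l r ihl ihr =>
    by_cases h : k ≤ deg l
    · have := ihl h
      simpa [split, h, graftL] using tamari_node_left r this
    · have hk' : k - deg l - 1 ≤ deg r := by simp [deg] at hk; omega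
      have := ihr hk'
      simp only [split, h, if_neg]
      exact tamari_trans (claimL' l _ _) (tamari_node_right l this)

lemma le_split {U : PBT} {k : ℕ} (hk : k ≤ deg U) :
    tamari U (graftR (split U k).1 (split U k).2) := by
  induction U generalizing k with
  | leaf => simp [deg] at hk; simp [split, hk, graftR]; exact tamari_refl _
  | node l r ihl ihr =>
    by_cases h : k ≤ deg l
    · have := ihl h
      simp only [split, h, if_pos]
      exact tamari_trans (tamari_node_left r this) (claimL _ _ _)
    · have hk' : k - deg l - 1 ≤ deg r := by simp [deg] at hk; omega
      have := ihr hk'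
      simp only [split, h, if_neg, graftR]
      exact tamari_node_right l this

lemma split_mono_rot {U V : PBT} (h : rot U V) :
    ∀ k, k ≤ deg U →
      tamari (split U k).1 (split V k).1 ∧ tamari (split U k).2 (split V k).2 := by
  induction h with
  | rotate A B C =>
    intro k hk
    simp only [deg] at hk
    by_cases h1 : k ≤ deg A
    · have hAB : k ≤ deg (node A B) := by simp only [deg]; omega
      simp only [split, if_pos hAB, if_pos h1]
      exact ⟨tamari_refl _, Relation.ReflTransGen.single (rot.rotate _ _ _)⟩
    · by_cases h2 : k ≤ deg A + deg B + 1
      · have hAB : k ≤ deg (node A B) := by simp only [deg]; omega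
        have hB : k - deg A - 1 ≤ deg B := by omega
        simp only [split, if_pos hAB, if_neg h1, if_pos hB]
        exact ⟨tamari_refl _, tamari_refl _⟩
      · have hAB : ¬ k ≤ deg (node A B) := by simp only [deg]; omega
        have hB : ¬ k - deg A - 1 ≤ deg B := by omega
        have harith : k - deg (node A B) - 1 = k - deg A - 1 - deg B - 1 := by
          simp only [deg]; omega
        simp only [split, if_neg hAB, if_neg h1, if_neg hB, harith]
        exact ⟨Relation.ReflTransGen.single (rot.rotate _ _ _), tamari_refl _⟩
  | @left S S' T h ih =>
    intro k hk
    have hdeg : deg S = deg S' := rot_deg h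
    by_cases h1 : k ≤ deg S
    · have h1' : k ≤ deg S' := hdeg ▸ h1
      simp only [split, if_pos h1, if_pos h1']
      obtain ⟨i1, i2⟩ := ih k h1
      exact ⟨i1, tamari_node_left _ i2⟩
    · have h1' : ¬ k ≤ deg S' := hdeg ▸ h1
      simp only [split, if_neg h1, if_neg h1', hdeg]
      exact ⟨tamari_node_left _ (Relation.ReflTransGen.single h), tamari_refl _⟩
  | @right S T T' h ih =>
    intro k hk
    by_cases h1 : k ≤ deg S
    · simp only [split, if_pos h1]
      exact ⟨tamari_refl _, tamari_node_right _ (Relation.ReflTransGen.single h)⟩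
    · have hk' : k - deg S - 1 ≤ deg T := by simp only [deg] at hk; omega
      simp only [split, if_neg h1]
      obtain ⟨i1, i2⟩ := ih _ hk'
      exact ⟨tamari_node_right _ i1, i2⟩

lemma split_mono {U V : PBT} (h : tamari U V) {k : ℕ} (hk : k ≤ deg U) :
    tamari (split U k).1 (split V k).1 ∧ tamari (split U k).2 (split V k).2 := by
  induction h with
  | refl => exact ⟨tamari_refl _, tamari_refl _⟩
  | @tail b c hab hbc ih =>
    have hkb : k ≤ deg b := by rw [← tamari_deg hab]; exact hk
    obtain ⟨j1, j2⟩ := split_mono_rot hbc k hkb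
    exact ⟨(ih.1).trans j1, (ih.2).trans j2⟩

/-- decomposability pulls back along a single rotation. -/
lemma rot_decomp {A B U' : PBT} (h : rot U' (graftL A B)) :
    ∃ A' B', U' = graftL A' B' ∧ deg A' = deg A := by
  induction B generalizing U' with
  | leaf =>
    exact ⟨U', leaf, rfl, rot_deg h⟩
  | node l r ihl ihr =>
    rw [graftL] at h
    generalize hX : graftL A l = X at *
    cases h with
    | rotate P Q Z =>
      -- graftL A l = node P Q? pattern: rot (node (node P Q) Z) (node P (node Q Z))
      -- target is node X r, so X = P, r = node Q Z, U' = node (node P Q) Z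
      exact ⟨A, node (node l Q) Z, by simp [graftL, hX], rfl⟩
    | @left S _ T h' =>
      obtain ⟨A', l', hl', hd⟩ := ihl h'
      exact ⟨A', node l' r, by simp [graftL, hl'], hd⟩
    | @right _ T' _ h' =>
      exact ⟨A, node l T', by simp [graftL, hX], rfl⟩

lemma tamari_decomp {U V : PBT} (h : tamari U V) {n₁ : ℕ}
    (hd : ∃ A B, V = graftL A B ∧ deg A = n₁) :
    ∃ A B, U = graftL A B ∧ deg A = n₁ := by
  induction h using Relation.ReflTransGen.head_induction_on with
  | refl => exact hd
  | head h' _ ih =>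
    obtain ⟨A, B, hAB, hdA⟩ := ih
    obtain ⟨A', B', h1, h2⟩ := rot_decomp (hAB ▸ h')
    exact ⟨A', B', h1, h2.trans hdA⟩

/-- Lemma A: `S₁/S₂ ≤ U` iff componentwise below the splitting of `U`. -/
lemma graftL_le_iff {U S₁ S₂ : PBT} {n₁ : ℕ} (hd : deg S₁ = n₁) (hU : n₁ ≤ deg U) :
    tamari (graftL S₁ S₂) U ↔
      tamari S₁ (split U n₁).1 ∧ tamari S₂ (split U n₁).2 := by
  constructor
  · intro h
    have hk : n₁ ≤ deg (graftL S₁ S₂) := by rw [deg_graftL, hd]; omega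
    have := split_mono h hk
    rwa [← hd, split_graftL, hd] at this
  · rintro ⟨h1, h2⟩
    exact (tamari_graftL h1 h2).trans (split_le hU)

/-- Lemma B: if `U` is decomposable, `U ≤ S₁/S₂` iff componentwise above. -/
lemma le_graftL_iff {U S₁ S₂ : PBT} {n₁ : ℕ}
    (hdec : graftL (split U n₁).1 (split U n₁).2 = U)
    (hd : deg S₁ = n₁) (hU : n₁ ≤ deg U) :
    tamari U (graftL S₁ S₂) ↔
      tamari (split U n₁).1 S₁ ∧ tamari (split U n₁).2 S₂ := by
  constructor
  · intro h
    have := split_mono h hU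
    rwa [← hd, split_graftL, hd] at this
  · rintro ⟨h1, h2⟩
    rw [← hdec]
    exact tamari_graftL h1 h2

/-- If `U` is not decomposable at `n₁`, nothing decomposable at `n₁` is above it. -/
lemma not_le_graftL {U S₁ S₂ : PBT} {n₁ : ℕ}
    (hndec : graftL (split U n₁).1 (split U n₁).2 ≠ U)
    (hd : deg S₁ = n₁) :
    ¬ tamari U (graftL S₁ S₂) := by
  intro h
  obtain ⟨A, B, hAB, hdA⟩ := tamari_decomp h ⟨S₁, S₂, rfl, hd⟩
  apply hndec
  rw [hAB, ← hdA, split_graftL]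

/-- Lemma P: characterization of the dendriform interval. -/
lemma interval_iff_split {U T₁ T₂ : PBT} {n₁ : ℕ} (hd : deg T₁ = n₁) (hU : n₁ ≤ deg U) :
    (tamari (graftL T₁ T₂) U ∧ tamari U (graftR T₁ T₂)) ↔ split U n₁ = (T₁, T₂) := by
  constructor
  · rintro ⟨h1, h2⟩
    have hlow := (graftL_le_iff hd hU).1 h1
    have hup := split_mono h2 hU
    rw [← hd, split_graftR, hd] at hup
    have e1 : (split U n₁).1 = T₁ := tamari_antisymm hup.1 hlow.1
    have e2 : (split U n₁).2 = T₂ := tamari_antisymm hup.2 hlow.2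
    exact Prod.ext e1 e2
  · intro h
    constructor
    · have := split_le hU
      rwa [h] at this
    · have := le_split hU
      rwa [h] at this

end PBT
section MatrixPart

open PBT Matrix

lemma lmat_blockTriangular (m : ℕ) [Fintype (PBTdeg m)] :
    (Lmat m).BlockTriangular (fun U : PBTdeg m => -(PBT.w U.1 : ℤ)) := by
  intro i j hij
  simp only [Lmat, Matrix.of_apply, ite_eq_right_iff]
  intro h
  exfalso
  have := PBT.tamari_w h
  simp only [neg_lt_neg_iff, Int.ofNat_lt, Nat.cast_lt] at hij
  omega

lemma lmat_det (m : ℕ) [Fintype (PBTdeg m)] : (Lmat m).det = 1 := by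
  classical
  rw [Matrix.BlockTriangular.det (lmat_blockTriangular m)]
  refine Finset.prod_eq_one fun a _ => ?_
  have hblock : (Lmat m).toSquareBlock (fun U : PBTdeg m => -(PBT.w U.1 : ℤ)) a = 1 := by
    ext i j
    by_cases hij : i = j
    · subst hij
      simp [Matrix.toSquareBlock, Matrix.toSquareBlockProp, Matrix.one_apply, Lmat,
        PBT.tamari_refl]
    · have hne : i.1.1 ≠ j.1.1 := by
        intro h
        exact hij (Subtype.ext (Subtype.ext h))
      have hzero : ¬ PBT.tamari i.1.1 j.1.1 := by
        intro h
        have hw := PBT.tamari_w_strict h hne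
        have hi := i.2
        have hj := j.2
        have : (PBT.w i.1.1 : ℤ) = (PBT.w j.1.1 : ℤ) := by rw [← neg_inj, hi, hj]
        omega
      simp [Matrix.toSquareBlock, Matrix.toSquareBlockProp, Matrix.one_apply, Lmat,
        hzero, Subtype.ext_iff, hij]
  rw [hblock, Matrix.det_one]

lemma lmat_det_isUnit (m : ℕ) [Fintype (PBTdeg m)] : IsUnit ((Lmat m)ᵀ).det := by
  rw [Matrix.det_transpose, lmat_det]; exact isUnit_one

lemma lmatT_mul_inv (m : ℕ) [Fintype (PBTdeg m)] :
    (Lmat m)ᵀ * ((Lmat m)ᵀ)⁻¹ = 1 :=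
  Matrix.mul_nonsing_inv _ (lmat_det_isUnit m)

lemma lmatT_inv_mul (m : ℕ) [Fintype (PBTdeg m)] :
    ((Lmat m)ᵀ)⁻¹ * (Lmat m)ᵀ = 1 :=
  Matrix.nonsing_inv_mul _ (lmat_det_isUnit m)

end MatrixPart
section MainPart

open PBT Matrix

lemma ind_mul_ind (P Q : Prop) [Decidable P] [Decidable Q] :
    (if P then (1:ℚ) else 0) * (if Q then 1 else 0) = if P ∧ Q then 1 else 0 := by
  by_cases hP : P <;> by_cases hQ : Q <;> simp [hP, hQ]

lemma sumCollapse {m : ℕ} [Fintype (PBTdeg m)] {T : PBT} (h : T.deg = m)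
    (f : PBTdeg m → ℚ) :
    ∑ V : PBTdeg m, f V * (if V.1 = T then 1 else 0) = f ⟨T, h⟩ := by
  classical
  rw [Fintype.sum_eq_single (⟨T, h⟩ : PBTdeg m)]
  · simp
  · intro V hV
    have : ¬ (V.1 = T) := fun hc => hV (Subtype.ext hc)
    simp [this]

lemma sumCollapse₂ {m₁ m₂ : ℕ} [Fintype (PBTdeg m₁)] [Fintype (PBTdeg m₂)]
    {T₁ T₂ : PBT} (h₁ : T₁.deg = m₁) (h₂ : T₂.deg = m₂)
    (F : PBTdeg m₁ → PBTdeg m₂ → ℚ) :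
    (∑ S₁ : PBTdeg m₁, ∑ S₂ : PBTdeg m₂,
      F S₁ S₂ * ((if S₁.1 = T₁ then 1 else 0) * (if S₂.1 = T₂ then 1 else 0)))
      = F ⟨T₁, h₁⟩ ⟨T₂, h₂⟩ := by
  classical
  have step : ∀ S₁ : PBTdeg m₁,
      (∑ S₂ : PBTdeg m₂, F S₁ S₂ * ((if S₁.1 = T₁ then 1 else 0) *
        (if S₂.1 = T₂ then 1 else 0)))
        = F S₁ ⟨T₂, h₂⟩ * (if S₁.1 = T₁ then 1 else 0) := by
    intro S₁
    calc (∑ S₂ : PBTdeg m₂, F S₁ S₂ * ((if S₁.1 = T₁ then 1 else 0) *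
            (if S₂.1 = T₂ then 1 else 0)))
        = ∑ S₂ : PBTdeg m₂, (F S₁ S₂ * (if S₁.1 = T₁ then 1 else 0)) *
            (if S₂.1 = T₂ then 1 else 0) :=
          Finset.sum_congr rfl fun _ _ => by ring
      _ = F S₁ ⟨T₂, h₂⟩ * (if S₁.1 = T₁ then 1 else 0) := sumCollapse h₂ _
  simp only [step]
  exact sumCollapse h₁ _

end MainPart
section MainPart2

open PBT Matrix Classical

variable {n₁ n₂ : ℕ} [Fintype (PBTdeg n₁)] [Fintype (PBTdeg n₂)]
  [Fintype (PBTdeg (n₁ + n₂))]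

lemma sum_ind_gprodL (f : PBTdeg n₁ → ℚ) (g : PBTdeg n₂ → ℚ) (a : PBT → ℚ) :
    ∑ V : PBTdeg (n₁ + n₂), a V.1 * gprodL f g V
      = ∑ S₁ : PBTdeg n₁, ∑ S₂ : PBTdeg n₂,
          f S₁ * g S₂ * a (graftL S₁.1 S₂.1) := by
  classical
  unfold gprodL
  calc ∑ V : PBTdeg (n₁ + n₂), a V.1 * ∑ S₁ : PBTdeg n₁, ∑ S₂ : PBTdeg n₂,
          f S₁ * g S₂ * (if V.1 = graftL S₁.1 S₂.1 then 1 else 0)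
      = ∑ V : PBTdeg (n₁ + n₂), ∑ S₁ : PBTdeg n₁, ∑ S₂ : PBTdeg n₂,
          (f S₁ * g S₂ * a V.1) * (if V.1 = graftL S₁.1 S₂.1 then 1 else 0) := by
        refine Finset.sum_congr rfl fun V _ => ?_
        rw [Finset.mul_sum]
        refine Finset.sum_congr rfl fun S₁ _ => ?_
        rw [Finset.mul_sum]
        exact Finset.sum_congr rfl fun S₂ _ => by ring
    _ = ∑ S₁ : PBTdeg n₁, ∑ V : PBTdeg (n₁ + n₂), ∑ S₂ : PBTdeg n₂,
          (f S₁ * g S₂ * a V.1) * (if V.1 = graftL S₁.1 S₂.1 then 1 else 0) :=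
        Finset.sum_comm
    _ = ∑ S₁ : PBTdeg n₁, ∑ S₂ : PBTdeg n₂, ∑ V : PBTdeg (n₁ + n₂),
          (f S₁ * g S₂ * a V.1) * (if V.1 = graftL S₁.1 S₂.1 then 1 else 0) :=
        Finset.sum_congr rfl fun S₁ _ => Finset.sum_comm
    _ = ∑ S₁ : PBTdeg n₁, ∑ S₂ : PBTdeg n₂, f S₁ * g S₂ * a (graftL S₁.1 S₂.1) := by
        refine Finset.sum_congr rfl fun S₁ _ => Finset.sum_congr rfl fun S₂ _ => ?_
        exact sumCollapse (by rw [deg_graftL, S₁.2, S₂.2]) (fun V => f S₁ * g S₂ * a V.1)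

lemma mulVec_lmatT_gprodL (f : PBTdeg n₁ → ℚ) (g : PBTdeg n₂ → ℚ)
    (U : PBTdeg (n₁ + n₂)) :
    ((Lmat (n₁ + n₂))ᵀ.mulVec (gprodL f g)) U
      = ∑ S₁ : PBTdeg n₁, ∑ S₂ : PBTdeg n₂,
          f S₁ * g S₂ * (if tamari (graftL S₁.1 S₂.1) U.1 then 1 else 0) := by
  classical
  have : ((Lmat (n₁ + n₂))ᵀ.mulVec (gprodL f g)) U
      = ∑ V : PBTdeg (n₁ + n₂),
          (if tamari V.1 U.1 then (1:ℚ) else 0) * gprodL f g V := by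
    simp [Matrix.mulVec, dotProduct, Matrix.transpose_apply, Lmat]
  rw [this]
  exact sum_ind_gprodL f g (fun X => if tamari X U.1 then 1 else 0)

lemma mulVec_lmat_gprodL (f : PBTdeg n₁ → ℚ) (g : PBTdeg n₂ → ℚ)
    (U : PBTdeg (n₁ + n₂)) :
    ((Lmat (n₁ + n₂)).mulVec (gprodL f g)) U
      = ∑ S₁ : PBTdeg n₁, ∑ S₂ : PBTdeg n₂,
          f S₁ * g S₂ * (if tamari U.1 (graftL S₁.1 S₂.1) then 1 else 0) := by
  classical
  have : ((Lmat (n₁ + n₂)).mulVec (gprodL f g)) U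
      = ∑ V : PBTdeg (n₁ + n₂),
          (if tamari U.1 V.1 then (1:ℚ) else 0) * gprodL f g V := by
    simp [Matrix.mulVec, dotProduct, Lmat]
  rw [this]
  exact sum_ind_gprodL f g (fun X => if tamari U.1 X then 1 else 0)

end MainPart2
section MainPart3

open PBT Matrix Classical

variable {n₁ n₂ : ℕ} [Fintype (PBTdeg n₁)] [Fintype (PBTdeg n₂)]
  [Fintype (PBTdeg (n₁ + n₂))]

lemma mulVecT_ind (f : PBTdeg n₁ → ℚ) (G : PBT) (hG : G.deg = n₁) :
    ((Lmat n₁)ᵀ.mulVec f) ⟨G, hG⟩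
      = ∑ S₁ : PBTdeg n₁, f S₁ * (if tamari S₁.1 G then 1 else 0) := by
  simp only [Matrix.mulVec, dotProduct, Matrix.transpose_apply, Lmat,
    Matrix.of_apply]
  exact Finset.sum_congr rfl fun S₁ _ => by ring

lemma mulVec_ind (f : PBTdeg n₁ → ℚ) (G : PBT) (hG : G.deg = n₁) :
    ((Lmat n₁).mulVec f) ⟨G, hG⟩
      = ∑ S₁ : PBTdeg n₁, f S₁ * (if tamari G S₁.1 then 1 else 0) := by
  simp only [Matrix.mulVec, dotProduct, Lmat, Matrix.of_apply]
  exact Finset.sum_congr rfl fun S₁ _ => by ring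

lemma lmatT_mulVec_gprodL (f : PBTdeg n₁ → ℚ) (g : PBTdeg n₂ → ℚ)
    (U : PBTdeg (n₁ + n₂)) {G H : PBT} (hGH : split U.1 n₁ = (G, H))
    (hG : G.deg = n₁) (hH : H.deg = n₂) :
    ((Lmat (n₁ + n₂))ᵀ.mulVec (gprodL f g)) U
      = ((Lmat n₁)ᵀ.mulVec f) ⟨G, hG⟩ * ((Lmat n₂)ᵀ.mulVec g) ⟨H, hH⟩ := by
  classical
  have hU1 : n₁ ≤ deg U.1 := by rw [U.2]; omega
  rw [mulVec_lmatT_gprodL, mulVecT_ind f G hG, mulVecT_ind g H hH]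
  rw [Finset.sum_mul_sum]
  refine Finset.sum_congr rfl fun S₁ _ => Finset.sum_congr rfl fun S₂ _ => ?_
  have hiff : tamari (graftL S₁.1 S₂.1) U.1 ↔ tamari S₁.1 G ∧ tamari S₂.1 H := by
    have := graftL_le_iff S₁.2 hU1 (S₂ := S₂.1)
    rwa [hGH] at this
  simp only [propext hiff]
  by_cases e1 : tamari S₁.1 G <;> by_cases e2 : tamari S₂.1 H <;>
    simp [e1, e2]

lemma lmat_mulVec_gprodL (f : PBTdeg n₁ → ℚ) (g : PBTdeg n₂ → ℚ) :
    (Lmat (n₁ + n₂)).mulVec (gprodL f g)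
      = gprodL ((Lmat n₁).mulVec f) ((Lmat n₂).mulVec g) := by
  classical
  funext U
  have hU1 : n₁ ≤ deg U.1 := by rw [U.2]; omega
  have hG : deg (split U.1 n₁).1 = n₁ := (split_deg hU1).1
  have hH : deg (split U.1 n₁).2 = n₂ := by
    have := (split_deg hU1).2; rw [U.2] at this; omega
  rw [mulVec_lmat_gprodL]
  by_cases hdec : graftL (split U.1 n₁).1 (split U.1 n₁).2 = U.1
  · have lhs_eq : (∑ S₁ : PBTdeg n₁, ∑ S₂ : PBTdeg n₂,
        f S₁ * g S₂ * (if tamari U.1 (graftL S₁.1 S₂.1) then 1 else 0))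
        = ((Lmat n₁).mulVec f) ⟨(split U.1 n₁).1, hG⟩ *
          ((Lmat n₂).mulVec g) ⟨(split U.1 n₁).2, hH⟩ := by
      rw [mulVec_ind f _ hG, mulVec_ind g _ hH, Finset.sum_mul_sum]
      refine Finset.sum_congr rfl fun S₁ _ => Finset.sum_congr rfl fun S₂ _ => ?_
      have hiff := le_graftL_iff hdec S₁.2 hU1 (S₂ := S₂.1)
      simp only [propext hiff]
      by_cases e1 : tamari (split U.1 n₁).1 S₁.1 <;>
        by_cases e2 : tamari (split U.1 n₁).2 S₂.1 <;> simp [e1, e2]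
    rw [lhs_eq]
    -- now the right-hand side
    have rhs_eq : gprodL ((Lmat n₁).mulVec f) ((Lmat n₂).mulVec g) U
        = ((Lmat n₁).mulVec f) ⟨(split U.1 n₁).1, hG⟩ *
          ((Lmat n₂).mulVec g) ⟨(split U.1 n₁).2, hH⟩ := by
      unfold gprodL
      have key : ∀ (S₁ : PBTdeg n₁) (S₂ : PBTdeg n₂),
          (if U.1 = graftL S₁.1 S₂.1 then (1:ℚ) else 0)
            = (if S₁.1 = (split U.1 n₁).1 then (1:ℚ) else 0) *
              (if S₂.1 = (split U.1 n₁).2 then 1 else 0) := by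
        intro S₁ S₂
        have hiff : (U.1 = graftL S₁.1 S₂.1) ↔
            (S₁.1 = (split U.1 n₁).1 ∧ S₂.1 = (split U.1 n₁).2) := by
          constructor
          · intro h
            have := split_graftL S₁.1 S₂.1
            rw [S₁.2, ← h] at this
            exact ⟨by rw [this], by rw [this]⟩
          · rintro ⟨e1, e2⟩
            rw [← hdec, e1, e2]
        simp only [propext hiff]
        by_cases e1 : S₁.1 = (split U.1 n₁).1 <;>
          by_cases e2 : S₂.1 = (split U.1 n₁).2 <;> simp [e1, e2]
      calc (∑ S₁ : PBTdeg n₁, ∑ S₂ : PBTdeg n₂,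
              ((Lmat n₁).mulVec f) S₁ * ((Lmat n₂).mulVec g) S₂ *
                (if U.1 = graftL S₁.1 S₂.1 then 1 else 0))
          = ∑ S₁ : PBTdeg n₁, ∑ S₂ : PBTdeg n₂,
              (((Lmat n₁).mulVec f) S₁ * ((Lmat n₂).mulVec g) S₂) *
                ((if S₁.1 = (split U.1 n₁).1 then (1:ℚ) else 0) *
                 (if S₂.1 = (split U.1 n₁).2 then 1 else 0)) := by
            refine Finset.sum_congr rfl fun S₁ _ => Finset.sum_congr rfl fun S₂ _ => ?_
            rw [← key S₁ S₂]
        _ = ((Lmat n₁).mulVec f) ⟨(split U.1 n₁).1, hG⟩ *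
            ((Lmat n₂).mulVec g) ⟨(split U.1 n₁).2, hH⟩ :=
            sumCollapse₂ hG hH _
    rw [rhs_eq]
  · -- not decomposable: both sides vanish
    have lhs0 : (∑ S₁ : PBTdeg n₁, ∑ S₂ : PBTdeg n₂,
        f S₁ * g S₂ * (if tamari U.1 (graftL S₁.1 S₂.1) then 1 else 0)) = 0 := by
      refine Finset.sum_eq_zero fun S₁ _ => Finset.sum_eq_zero fun S₂ _ => ?_
      rw [if_neg (not_le_graftL hdec S₁.2), mul_zero]
    have rhs0 : gprodL ((Lmat n₁).mulVec f) ((Lmat n₂).mulVec g) U = 0 := by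
      unfold gprodL
      refine Finset.sum_eq_zero fun S₁ _ => Finset.sum_eq_zero fun S₂ _ => ?_
      have : ¬ (U.1 = graftL S₁.1 S₂.1) := by
        intro h
        apply hdec
        have := split_graftL S₁.1 S₂.1
        rw [S₁.2, ← h] at this
        rw [this]
        exact h.symm
      rw [if_neg this, mul_zero]
    rw [lhs0, rhs0]

lemma dprod_delta_eq (T₁ T₂ : PBT) (h₁ : T₁.deg = n₁) (h₂ : T₂.deg = n₂)
    (U : PBTdeg (n₁ + n₂)) :
    dprod (delta n₁ T₁) (delta n₂ T₂) U
      = if split U.1 n₁ = (T₁, T₂) then 1 else 0 := by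
  classical
  have hU1 : n₁ ≤ deg U.1 := by rw [U.2]; omega
  unfold dprod delta
  calc (∑ S₁ : PBTdeg n₁, ∑ S₂ : PBTdeg n₂,
          (if S₁.1 = T₁ then (1:ℚ) else 0) * (if S₂.1 = T₂ then 1 else 0) *
            (if tamari (graftL S₁.1 S₂.1) U.1 ∧ tamari U.1 (graftR S₁.1 S₂.1)
              then 1 else 0))
      = ∑ S₁ : PBTdeg n₁, ∑ S₂ : PBTdeg n₂,
          (if tamari (graftL S₁.1 S₂.1) U.1 ∧ tamari U.1 (graftR S₁.1 S₂.1)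
              then (1:ℚ) else 0) *
            ((if S₁.1 = T₁ then (1:ℚ) else 0) * (if S₂.1 = T₂ then 1 else 0)) := by
        refine Finset.sum_congr rfl fun S₁ _ => Finset.sum_congr rfl fun S₂ _ => ?_
        ring
    _ = (if tamari (graftL T₁ T₂) U.1 ∧ tamari U.1 (graftR T₁ T₂) then (1:ℚ) else 0) :=
        sumCollapse₂ h₁ h₂ _
    _ = (if split U.1 n₁ = (T₁, T₂) then 1 else 0) := by
        simp only [propext (interval_iff_split h₁ hU1)]

end MainPart3
section FinalPart

open PBT Matrix Classical

lemma gprodL_neg_neg {n₁ n₂ : ℕ} [Fintype (PBTdeg n₁)] [Fintype (PBTdeg n₂)]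
    (f : PBTdeg n₁ → ℚ) (g : PBTdeg n₂ → ℚ) :
    gprodL (-f) (-g) = gprodL f g := by
  funext U
  unfold gprodL
  refine Finset.sum_congr rfl fun S₁ _ => Finset.sum_congr rfl fun S₂ _ => ?_
  simp only [Pi.neg_apply]
  ring

end FinalPart

open PBT in
/-- `θ(T¹ * T²) = -θ(T¹)/θ(T²)`, where `θ` is the Coxeter
transformation, `*` the dendriform product and `/` the bilinearly extended
left grafting. -/
theorem theta_star (n₁ n₂ : ℕ) [Fintype (PBTdeg n₁)] [Fintype (PBTdeg n₂)]
    [Fintype (PBTdeg (n₁ + n₂))] (T₁ T₂ : PBT) (h₁ : T₁.deg = n₁) (h₂ : T₂.deg = n₂) :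
    (thetaMat (n₁ + n₂)).mulVec (dprod (delta n₁ T₁) (delta n₂ T₂)) =
      -gprodL ((thetaMat n₁).mulVec (delta n₁ T₁)) ((thetaMat n₂).mulVec (delta n₂ T₂)) := by
  classical
  set x₁ : PBTdeg n₁ → ℚ := ((Lmat n₁).transpose)⁻¹.mulVec (delta n₁ T₁) with hx₁def
  set x₂ : PBTdeg n₂ → ℚ := ((Lmat n₂).transpose)⁻¹.mulVec (delta n₂ T₂) with hx₂def
  have hx₁ : (Lmat n₁).transpose.mulVec x₁ = delta n₁ T₁ := by
    rw [hx₁def, Matrix.mulVec_mulVec, lmatT_mul_inv, Matrix.one_mulVec]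
  have hx₂ : (Lmat n₂).transpose.mulVec x₂ = delta n₂ T₂ := by
    rw [hx₂def, Matrix.mulVec_mulVec, lmatT_mul_inv, Matrix.one_mulVec]
  -- Step 1 : Zᵀ (x₁/x₂) = T₁ * T₂
  have hstep1 : (Lmat (n₁ + n₂)).transpose.mulVec (gprodL x₁ x₂)
      = dprod (delta n₁ T₁) (delta n₂ T₂) := by
    funext U
    have hU1 : n₁ ≤ deg U.1 := by rw [U.2]; omega
    have hG : deg (split U.1 n₁).1 = n₁ := (split_deg hU1).1
    have hH : deg (split U.1 n₁).2 = n₂ := by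
      have := (split_deg hU1).2; rw [U.2] at this; omega
    rw [lmatT_mulVec_gprodL x₁ x₂ U rfl hG hH, hx₁, hx₂,
      dprod_delta_eq T₁ T₂ h₁ h₂ U]
    have hiff : ((split U.1 n₁).1 = T₁ ∧ (split U.1 n₁).2 = T₂) ↔
        split U.1 n₁ = (T₁, T₂) := by
      constructor
      · rintro ⟨e1, e2⟩; exact Prod.ext e1 e2
      · intro h; exact ⟨by rw [h], by rw [h]⟩
    show (if (split U.1 n₁).1 = T₁ then (1:ℚ) else 0) *
        (if (split U.1 n₁).2 = T₂ then 1 else 0) = _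
    by_cases e1 : (split U.1 n₁).1 = T₁ <;> by_cases e2 : (split U.1 n₁).2 = T₂ <;>
      simp [e1, e2, propext hiff.symm, ← propext hiff]
  -- Step 2
  have hstep2 : ((Lmat (n₁ + n₂)).transpose)⁻¹.mulVec (dprod (delta n₁ T₁) (delta n₂ T₂))
      = gprodL x₁ x₂ := by
    rw [← hstep1, Matrix.mulVec_mulVec, lmatT_inv_mul, Matrix.one_mulVec]
  -- assemble
  rw [thetaMat, thetaMat, thetaMat, Matrix.neg_mulVec, Matrix.neg_mulVec,
    Matrix.neg_mulVec, ← Matrix.mulVec_mulVec, ← Matrix.mulVec_mulVec,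
    ← Matrix.mulVec_mulVec, hstep2, lmat_mulVec_gprodL, ← hx₁def, ← hx₂def,
    ← gprodL_neg_neg ((Lmat n₁).mulVec x₁) ((Lmat n₂).mulVec x₂)]
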